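/- Let n, m ≥ 1, let g : ℝ^n → ℝ^m be any function, and let H ⊆ ℝ^n be a countable set. Let W be a random n × m real matrix whose entries are mutually independent random variables, each with an atomless distribution. Define F_W : ℝ^n → ℝ^n by F_W(h) = h + W g(h) (matrix–vector product). Then almost surely F_W is injective on H: P( for all h₁, h₂ ∈ H with h₁ ≠ h₂, F_W(h₁) ≠ F_W(h₂) ) = 1. -/

import Mathlib

open MeasureTheory ProbabilityTheory

/-- If `X` is independent of `Z`, and the law of `X` is atomless, then
`P {X = Z} = 0`. -/
lemma aux_indep_atomless_ne {Ω : Type*} [MeasurableSpace Ω]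
    (P : Measure Ω) [IsProbabilityMeasure P]
    (X Z : Ω → ℝ) (hX : Measurable X) (hZ : Measurable Z)
    (hind : IndepFun X Z P) (hat : ∀ x : ℝ, P.map X {x} = 0) :
    P {ω | X ω = Z ω} = 0 := by
  have hmap : P.map (fun ω => (Z ω, X ω)) = (P.map Z).prod (P.map X) :=
    (indepFun_iff_map_prod_eq_prod_map_map hZ.aemeasurable hX.aemeasurable).mp hind.symm
  have hs : MeasurableSet {p : ℝ × ℝ | p.2 = p.1} :=
    measurableSet_eq_fun measurable_snd measurable_fst
  have heq : P {ω | X ω = Z ω}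
      = (P.map (fun ω => (Z ω, X ω))) {p : ℝ × ℝ | p.2 = p.1} := by
    rw [Measure.map_apply (hZ.prodMk hX) hs]
    rfl
  rw [heq, hmap, Measure.prod_apply hs]
  have hslice : ∀ z : ℝ, (P.map X) (Prod.mk z ⁻¹' {p : ℝ × ℝ | p.2 = p.1}) = 0 := by
    intro z
    have : Prod.mk z ⁻¹' {p : ℝ × ℝ | p.2 = p.1} = {z} := by
      ext x; simp [eq_comm]
    rw [this]; exact hat z
  simp [hslice, hat]

/-- **Residual sub-blocks with random output matrices are almost surely
injective on countable sets.** For any function `g : ℝⁿ → ℝᵐ`, a countable set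
`H ⊆ ℝⁿ`, and a random `n × m` matrix `W` with mutually independent, atomless
entries, the map `h ↦ h + W g(h)` is almost surely injective on `H`. -/
theorem residual_random_matrix_ae_injective
    {Ω : Type*} [MeasurableSpace Ω]
    (P : Measure Ω) [IsProbabilityMeasure P]
    (n m : ℕ) (hn : 1 ≤ n) (hm : 1 ≤ m)
    (g : (Fin n → ℝ) → (Fin m → ℝ))
    (H : Set (Fin n → ℝ)) (hH : H.Countable)
    (W : Ω → Matrix (Fin n) (Fin m) ℝ)
    (hmeas : ∀ (i : Fin n) (j : Fin m), Measurable (fun ω => W ω i j))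
    (hindep : iIndepFun (m := fun _ : Fin n × Fin m => (inferInstance : MeasurableSpace ℝ))
      (fun p ω => W ω p.1 p.2) P)
    (hatomless : ∀ (i : Fin n) (j : Fin m) (x : ℝ),
      P.map (fun ω => W ω i j) {x} = 0) :
    P {ω | ∀ h₁ ∈ H, ∀ h₂ ∈ H, h₁ ≠ h₂ →
        h₁ + (W ω).mulVec (g h₁) ≠ h₂ + (W ω).mulVec (g h₂)} = 1 := by
  classical
  -- the key pairwise estimate
  have key : ∀ h₁ h₂ : Fin n → ℝ, h₁ ≠ h₂ →
      P {ω | h₁ + (W ω).mulVec (g h₁) = h₂ + (W ω).mulVec (g h₂)} = 0 := by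
    intro h₁ h₂ hne
    by_cases hg : g h₁ = g h₂
    · have : {ω | h₁ + (W ω).mulVec (g h₁) = h₂ + (W ω).mulVec (g h₂)} = ∅ := by
        ext ω
        simp only [Set.mem_setOf_eq, Set.mem_empty_iff_false, iff_false]
        intro hcontra
        rw [hg] at hcontra
        exact hne (add_right_cancel hcontra)
      rw [this]; exact measure_empty
    · -- there is a coordinate where g h₁ and g h₂ differ
      obtain ⟨j₀, hj₀⟩ : ∃ j₀ : Fin m, g h₁ j₀ ≠ g h₂ j₀ := by
        by_contra hcon
        push_neg at hcon
        exact hg (funext hcon)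
      set u : Fin m → ℝ := fun j => g h₁ j - g h₂ j with hu
      have hu0 : u j₀ ≠ 0 := sub_ne_zero.mpr hj₀
      set i₀ : Fin n := ⟨0, hn⟩
      -- the independent family of summands
      set Y : Fin n × Fin m → Ω → ℝ := fun p ω => W ω p.1 p.2 * u p.2 with hY
      have hYindep : iIndepFun (m := fun _ : Fin n × Fin m => (inferInstance : MeasurableSpace ℝ))
          Y P := by
        have := hindep.comp (fun p (x : ℝ) => x * u p.2)
          (fun p => measurable_id.mul_const _)
        exact this
      have hYmeas : ∀ p : Fin n × Fin m, Measurable (Y p) :=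
        fun p => (hmeas p.1 p.2).mul_const _
      set s : Finset (Fin n × Fin m) :=
        (Finset.univ.erase j₀).image (fun j => (i₀, j)) with hs
      have hnot : (i₀, j₀) ∉ s := by
        simp [hs]
      have hSindep : IndepFun (∑ p ∈ s, Y p) (Y (i₀, j₀)) P :=
        hYindep.indepFun_finsetSum_of_notMem hYmeas hnot
      -- X and Z
      set X : Ω → ℝ := fun ω => W ω i₀ j₀ with hX
      set Z : Ω → ℝ :=
        fun ω => (h₂ i₀ - h₁ i₀ - ∑ j ∈ Finset.univ.erase j₀, W ω i₀ j * u j) / u j₀ with hZ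
      have hsum_eq : ∀ ω, (∑ p ∈ s, Y p) ω = ∑ j ∈ Finset.univ.erase j₀, W ω i₀ j * u j := by
        intro ω
        rw [Finset.sum_apply]
        rw [hs, Finset.sum_image (by intro a _ b _ hab; exact (Prod.mk.injEq _ _ _ _).mp hab |>.2)]
      have hXZindep : IndepFun X Z P := by
        have h1 : IndepFun (Y (i₀, j₀)) (∑ p ∈ s, Y p) P := hSindep.symm
        have h2 := h1.comp (φ := fun x : ℝ => x / u j₀)
          (ψ := fun y : ℝ => (h₂ i₀ - h₁ i₀ - y) / u j₀)
          (measurable_id.div_const _) ((measurable_const.sub measurable_id).div_const _)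
        have hXeq : ((fun x : ℝ => x / u j₀) ∘ (Y (i₀, j₀))) = X := by
          funext ω
          simp only [Function.comp_apply, hY, hX]
          field_simp
        have hZeq : ((fun y : ℝ => (h₂ i₀ - h₁ i₀ - y) / u j₀) ∘ (∑ p ∈ s, Y p)) = Z := by
          funext ω
          simp only [Function.comp_apply, hZ, hsum_eq ω]
        rwa [hXeq, hZeq] at h2
      have hZmeas : Measurable Z := by
        apply Measurable.div_const
        apply Measurable.sub measurable_const
        exact Finset.measurable_sum _ (fun j _ => (hmeas i₀ j).mul_const _)
      have hXZ : P {ω | X ω = Z ω} = 0 :=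
        aux_indep_atomless_ne P X Z (hmeas i₀ j₀) hZmeas hXZindep (hatomless i₀ j₀)
      refine measure_mono_null ?_ hXZ
      intro ω hω
      simp only [Set.mem_setOf_eq] at hω ⊢
      have hcoord : h₁ i₀ + ∑ j, W ω i₀ j * g h₁ j = h₂ i₀ + ∑ j, W ω i₀ j * g h₂ j := by
        have := congrFun hω i₀
        simpa [Matrix.mulVec, dotProduct] using this
      have hsum : ∑ j, W ω i₀ j * u j = h₂ i₀ - h₁ i₀ := by
        simp only [hu, mul_sub, Finset.sum_sub_distrib]
        linarith
      have hsplit : W ω i₀ j₀ * u j₀ + ∑ j ∈ Finset.univ.erase j₀, W ω i₀ j * u j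
          = h₂ i₀ - h₁ i₀ := by
        rw [← hsum]
        rw [← Finset.add_sum_erase _ _ (Finset.mem_univ j₀)]
      rw [hX, hZ]
      field_simp
      linarith
  -- combine over the countable set H
  set S : Set Ω := {ω | ∀ h₁ ∈ H, ∀ h₂ ∈ H, h₁ ≠ h₂ →
      h₁ + (W ω).mulVec (g h₁) ≠ h₂ + (W ω).mulVec (g h₂)} with hSdef
  have hcompl : P Sᶜ = 0 := by
    have hsub : Sᶜ ⊆ ⋃ h₁ ∈ H, ⋃ h₂ ∈ H,
        {ω | h₁ ≠ h₂ ∧ h₁ + (W ω).mulVec (g h₁) = h₂ + (W ω).mulVec (g h₂)} := by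
      intro ω hω
      simp only [hSdef, Set.mem_compl_iff, Set.mem_setOf_eq] at hω
      push_neg at hω
      obtain ⟨h₁, hh₁, h₂, hh₂, hne, heq⟩ := hω
      exact Set.mem_biUnion hh₁ (Set.mem_biUnion hh₂ ⟨hne, heq⟩)
    refine measure_mono_null hsub ?_
    refine (measure_biUnion_null_iff hH).mpr fun h₁ _ => ?_
    refine (measure_biUnion_null_iff hH).mpr fun h₂ _ => ?_
    by_cases hne : h₁ = h₂
    · have : {ω | h₁ ≠ h₂ ∧ h₁ + (W ω).mulVec (g h₁) = h₂ + (W ω).mulVec (g h₂)} = ∅ := by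
        ext ω; simp [hne]
      rw [this]; exact measure_empty
    · refine measure_mono_null ?_ (key h₁ h₂ hne)
      intro ω hω; exact hω.2
  have h1 : P S ≤ 1 := prob_le_one
  have h2 : (1 : ENNReal) ≤ P S := by
    calc (1 : ENNReal) = P Set.univ := measure_univ.symm
      _ = P (S ∪ Sᶜ) := by rw [Set.union_compl_self]
      _ ≤ P S + P Sᶜ := measure_union_le _ _
      _ = P S := by rw [hcompl, add_zero]
  exact le_antisymm h1 h2
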